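/- Let A be a commutative ring, w ∈ A a unit, and D : A → A any additive map. Let A((u)) be the module of formal Laurent series ∑_{k≥k₀} g_k u^k with coefficients g_k ∈ A, on which D acts coefficientwise and u^{-1} acts by shifting. Then the additive map Φ : A((u)) → A((u)) defined by Φ(g) = D(g) − u^{-1}·(w·g) is bijective. -/

import Mathlib

/-- **Bijectivity of `D - u⁻¹·w` on formal Laurent series.**
Let `A` be a commutative ring, `w ∈ A` a unit, and `D : A → A` an additive map.  On the
module `A((u))` of formal Laurent series (formalized as Hahn series over `ℤ`), any map `Φ`
acting on coefficients by `(Φ g)_k = D(g_k) - w·g_{k+1}` (i.e. `Φ(g) = D(g) - u⁻¹·(w·g)`,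
with `D` acting coefficientwise and `u⁻¹` shifting) is bijective. -/
theorem twisted_derivative_bijective_of_isUnit
    (A : Type*) [CommRing A] (w : A) (hw : IsUnit w) (D : A →+ A)
    (Φ : HahnSeries ℤ A → HahnSeries ℤ A)
    (hΦ : ∀ (g : HahnSeries ℤ A) (k : ℤ),
      (Φ g).coeff k = D (g.coeff k) - w * g.coeff (k + 1)) :
    Function.Bijective Φ := by
  obtain ⟨u, rfl⟩ := hw
  set w : A := (u : A)
  set v : A := ((u⁻¹ : Aˣ) : A) with hv
  have hwv : w * v = 1 := u.mul_inv
  constructor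
  · -- injectivity
    intro g₁ g₂ hg
    have key : ∀ k : ℤ, (g₁ - g₂).coeff (k + 1) = v * D ((g₁ - g₂).coeff k) := by
      intro k
      have h1 := hΦ g₁ k
      have h2 := hΦ g₂ k
      have hc : (Φ g₁).coeff k = (Φ g₂).coeff k := by rw [hg]
      rw [h1, h2] at hc
      have : w * (g₁.coeff (k + 1) - g₂.coeff (k + 1))
          = D (g₁.coeff k - g₂.coeff k) := by
        rw [mul_sub, map_sub]; linear_combination -hc
      have := congrArg (fun x => v * x) this
      simp only [← mul_assoc, mul_comm v w, hwv, one_mul] at this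
      simpa [HahnSeries.coeff_sub] using this
    by_contra hne
    have hd : g₁ - g₂ ≠ 0 := sub_ne_zero.mpr fun h => hne (by rw [h])
    have hord := HahnSeries.coeff_order_eq_zero.not.mpr hd
    set m := (g₁ - g₂).order
    have hprev : (g₁ - g₂).coeff (m - 1) = 0 :=
      HahnSeries.coeff_eq_zero_of_lt_order (by omega)
    have := key (m - 1)
    rw [hprev, map_zero, mul_zero, sub_add_cancel] at this
    exact hord this
  · -- surjectivity
    intro h
    by_cases h0 : h = 0
    · refine ⟨0, ?_⟩
      ext k
      rw [hΦ, h0]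
      simp
    set N : ℤ := h.order with hN
    set c : ℕ → A := fun n => Nat.rec (motive := fun _ => A) 0
      (fun n x => v * (D x - h.coeff (N + n))) n with hc
    have hc0 : c 0 = 0 := rfl
    have hcs : ∀ n : ℕ, c (n + 1) = v * (D (c n) - h.coeff (N + n)) := fun n => rfl
    set f : ℤ → A := fun k => if N ≤ k then c (k - N).toNat else 0 with hf
    have hsupp : ∀ m : ℤ, m < N → f m = 0 := by
      intro m hm; simp [hf, not_le.mpr hm]
    refine ⟨HahnSeries.ofSuppBddBelow f
      (HahnSeries.forallLTEqZero_supp_BddBelow f N hsupp), ?_⟩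
    ext k
    rw [hΦ]
    simp only [HahnSeries.ofSuppBddBelow_coeff]
    by_cases hk : N ≤ k
    · have hk1 : N ≤ k + 1 := by omega
      have ht : (k + 1 - N).toNat = (k - N).toNat + 1 := by omega
      have hNk : N + ((k - N).toNat : ℤ) = k := by omega
      rw [hf]
      simp only [hk, hk1, if_true]
      rw [ht, hcs, hNk, ← mul_assoc, hwv, one_mul]
      ring
    · have hfk : f k = 0 := hsupp k (by omega)
      have hfk1 : f (k + 1) = 0 := by
        by_cases hk1 : N ≤ k + 1
        · have : k + 1 = N := by omega
          simp [hf, hk1, this, hc0]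
        · exact hsupp (k + 1) (by omega)
      rw [hfk, hfk1, map_zero, mul_zero, sub_zero]
      exact (HahnSeries.coeff_eq_zero_of_lt_order (by omega)).symm
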